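/- arXiv:2202.00835 — 2 statements merged into one kernel-verified Lean document; each statement's English description precedes it below -/
import Mathlib

section
/- Suppose a composition α covers α' in position (i,j). Then c_{i,k}(α) = c_{i,k}(α') for every k in [i+1, j], c_{i,j+1}(α) = 1 + c_{i,j}(α), c_{i,j+1}(α') = c_{i,j}(α'), and c_{i,k}(α) > c_{i,k}(α') for every k > j. -/
/-- The matrix `c_{i,j}(α)` defined recursively in `j`. -/
def cmat (α : ℕ → ℕ) (i : ℕ) : ℕ → ℕ
  | 0 => 0
  | j + 1 =>
    if j + 1 ≤ i + 1 then 0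
    else cmat α i j + if α j < α i - cmat α i j then 1 else 0

/-- `α` covers `α'` in position `(i,j)`: conditions (a1)–(a4). -/
def CoversAt (α α' : ℕ → ℕ) (i j : ℕ) : Prop :=
  1 ≤ i ∧ i < j ∧
  α' i + 1 ≤ α i ∧
  α' j + α' i + 1 = α j + α i ∧
  (∀ k, k ≠ i → k ≠ j → α' k = α k) ∧
  cmat α i j = cmat α' i j ∧
  cmat α i j + α j = α' i

lemma cmat_zero (α : ℕ → ℕ) (i k : ℕ) (hk : k ≤ i + 1) : cmat α i k = 0 := by
  cases k with
  | zero => rfl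
  | succ j => simp [cmat, hk]

lemma cmat_succ (α : ℕ → ℕ) (i k : ℕ) (hk : i + 1 ≤ k) :
    cmat α i (k + 1) = cmat α i k + if α k < α i - cmat α i k then 1 else 0 := by
  have h : ¬ (k + 1 ≤ i + 1) := by omega
  simp [cmat, h]

lemma cmat_key (α α' : ℕ → ℕ) (i k : ℕ) (hk : i + 1 ≤ k)
    (hle : cmat α i k ≤ α i) (hle' : cmat α' i k ≤ α' i)
    (hAB : α' i - cmat α' i k ≤ α i - cmat α i k) :
    ∀ l, k ≤ l → (∀ m, k ≤ m → m < l → α' m = α m) →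
      cmat α i l ≤ α i ∧ cmat α' i l ≤ α' i ∧
      α' i - cmat α' i l ≤ α i - cmat α i l ∧
      cmat α' i l + cmat α i k ≤ cmat α i l + cmat α' i k := by
  intro l
  induction l with
  | zero => intro hkl _; omega
  | succ l ih =>
    intro hkl heq
    rcases Nat.lt_or_ge l k with hc | hc
    · have hkl' : k = l + 1 := by omega
      subst hkl'
      exact ⟨hle, hle', hAB, by omega⟩
    · obtain ⟨IH1, IH2, IH3, IH4⟩ := ih hc (fun m hm hml => heq m hm (by omega))
      rw [cmat_succ α i l (by omega), cmat_succ α' i l (by omega),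
        heq l hc (by omega)]
      by_cases h1 : α l < α i - cmat α i l <;>
        by_cases h2 : α l < α' i - cmat α' i l <;>
          simp only [h1, h2, if_true, if_false] <;> omega

/-- properties (i)–(iii) of a covering pair. -/
theorem cmat_of_coversAt (α α' : ℕ → ℕ) (i j : ℕ) (h : CoversAt α α' i j) :
    (∀ k, i + 1 ≤ k → k ≤ j → cmat α i k = cmat α' i k) ∧
    cmat α i (j + 1) = 1 + cmat α i j ∧
    cmat α' i (j + 1) = cmat α' i j ∧
    (∀ k, j < k → cmat α' i k < cmat α i k) := by
  obtain ⟨hi, hij, ha1, ha2, ha3, ha4, ha5⟩ := h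
  have hz : cmat α i (i + 1) = 0 := cmat_zero α i (i + 1) le_rfl
  have hz' : cmat α' i (i + 1) = 0 := cmat_zero α' i (i + 1) le_rfl
  have heq1 : ∀ m, i + 1 ≤ m → m < j → α' m = α m := fun m hm hmj =>
    ha3 m (by omega) (by omega)
  -- part (i)
  have part1 : ∀ k, i + 1 ≤ k → k ≤ j → cmat α i k = cmat α' i k := by
    intro k hk1 hk2
    obtain ⟨K1, K2, K3, K4⟩ := cmat_key α α' i (i + 1) le_rfl (by omega)
      (by omega) (by simp [hz, hz']; omega) k hk1
      (fun m hm hml => heq1 m hm (by omega))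
    obtain ⟨_, _, _, K5⟩ := cmat_key α α' i k hk1 K1 K2 K3 j hk2
      (fun m hm hml => heq1 m (by omega) hml)
    omega
  have hcj_le : cmat α i j ≤ α' i := by omega
  -- part (ii)
  have part2 : cmat α i (j + 1) = 1 + cmat α i j := by
    rw [cmat_succ α i j (by omega)]
    have : α j < α i - cmat α i j := by omega
    simp [this]; omega
  -- part (iii)
  have hcj' : cmat α' i j = cmat α i j := ha4.symm
  have part3 : cmat α' i (j + 1) = cmat α' i j := by
    rw [cmat_succ α' i j (by omega), hcj']
    have : ¬ (α' j < α' i - cmat α i j) := by omega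
    simp [this]
  -- part (iv)
  have part4 : ∀ k, j < k → cmat α' i k < cmat α i k := by
    intro k hk
    obtain ⟨_, _, _, K4⟩ := cmat_key α α' i (j + 1) (by omega)
      (by rw [part2]; omega) (by rw [part3, hcj']; omega)
      (by rw [part2, part3, hcj']; omega) k hk
      (fun m hm hml => ha3 m (by omega) (by omega))
    rw [part2, part3, hcj'] at K4
    omega
  exact ⟨part1, part2, part3, part4⟩
end

section
/- Let w, w' ∈ S_n with α = code(w) and α' = code(w'). Then w covers w' in the strong Bruhat order with w = w'·(i,j) (the transposition of positions i < j) if and only if α covers α' in position (i,j) in the composition covering relation. Consequently, the strong Bruhat order on S_n is isomorphic, via the Lehmer code, to the poset PC_n on C_n. -/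
/-- The partial order `≤_A` on compositions: the reflexive-transitive
closure of the covering relation. -/
def leA (α' α : ℕ → ℕ) : Prop :=
  Relation.ReflTransGen (fun x y => ∃ i j, CoversAt y x i j) α' α

/-- The Lehmer code of a permutation of `Fin n`. -/
def lehmer {n : ℕ} (w : Equiv.Perm (Fin n)) (i : Fin n) : ℕ :=
  (Finset.univ.filter (fun k : Fin n => i < k ∧ w k < w i)).card

/-- Number of inversions (the length) of a permutation. -/
def nInv {n : ℕ} (w : Equiv.Perm (Fin n)) : ℕ :=
  (Finset.univ.filter (fun p : Fin n × Fin n => p.1 < p.2 ∧ w p.2 < w p.1)).card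

/-- One step in the Bruhat order: right multiplication by a transposition
that increases the length. -/
def bruhatStep {n : ℕ} (u v : Equiv.Perm (Fin n)) : Prop :=
  (∃ i j : Fin n, i ≠ j ∧ v = u * Equiv.swap i j) ∧ nInv u < nInv v

/-- The strong Bruhat order on `S_n`. -/
def bruhatLE {n : ℕ} (u v : Equiv.Perm (Fin n)) : Prop :=
  Relation.ReflTransGen bruhatStep u v

/-- `w` covers `w'` in the strong Bruhat order. -/
def bruhatCovers {n : ℕ} (w w' : Equiv.Perm (Fin n)) : Prop :=
  bruhatLE w' w ∧ nInv w = nInv w' + 1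

/-- The Lehmer code of `w ∈ S_n`, as a function on 1-based positions in `ℕ`. -/
def codeP (n : ℕ) (w : Equiv.Perm (Fin n)) (i : ℕ) : ℕ :=
  if h : 1 ≤ i ∧ i ≤ n then
    (Finset.univ.filter (fun k : Fin n => i ≤ k.val ∧ w k < w ⟨i - 1, by omega⟩)).card
  else 0
open Finset Equiv

variable {n : ℕ}

lemma card_filter_split {α : Type*} (s : Finset α) (p q : α → Prop)
    [DecidablePred p] [DecidablePred q] :
    (s.filter p).card
      = (s.filter (fun x => p x ∧ q x)).card + (s.filter (fun x => p x ∧ ¬ q x)).card := by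
  rw [← Finset.filter_filter, ← Finset.filter_filter,
    Finset.card_filter_add_card_filter_not]


lemma card_filter_congr {α : Type*} {s : Finset α} {p q : α → Prop}
    [DecidablePred p] [DecidablePred q] (h : ∀ x ∈ s, p x ↔ q x) :
    (s.filter p).card = (s.filter q).card := by
  rw [Finset.filter_congr h]

/-- count of positions strictly between `i` and `m` (exclusive, 0-based) with value below `w i`. -/
def Cf (w : Equiv.Perm (Fin n)) (i : Fin n) (m : ℕ) : ℕ :=
  (Finset.univ.filter (fun k : Fin n => i < k ∧ k.val < m ∧ w k < w i)).card

/-- count of positions `≥ m` (0-based) with value below `w i`. -/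
def Bf (w : Equiv.Perm (Fin n)) (i : Fin n) (m : ℕ) : ℕ :=
  (Finset.univ.filter (fun k : Fin n => m ≤ k.val ∧ w k < w i)).card

lemma codeP_apply (w : Equiv.Perm (Fin n)) (i : Fin n) :
    codeP n w (i.val + 1) = lehmer w i := by
  have h : 1 ≤ i.val + 1 ∧ i.val + 1 ≤ n := ⟨Nat.le_add_left _ _, i.isLt⟩
  rw [codeP, dif_pos h]
  have : (⟨i.val + 1 - 1, by omega⟩ : Fin n) = i := by apply Fin.ext; simp
  rw [this, lehmer]
  apply card_filter_congr
  intro k _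
  simp only [Fin.lt_def]
  constructor
  · rintro ⟨h1, h2⟩; exact ⟨by omega, h2⟩
  · rintro ⟨h1, h2⟩; exact ⟨by omega, h2⟩

lemma codeP_out (w : Equiv.Perm (Fin n)) {k : ℕ} (h : ¬(1 ≤ k ∧ k ≤ n)) :
    codeP n w k = 0 := by rw [codeP, dif_neg h]

lemma lehmer_split (w : Equiv.Perm (Fin n)) {i : Fin n} {m : ℕ} (h : i.val < m) :
    lehmer w i = Cf w i m + Bf w i m := by
  rw [lehmer, card_filter_split _ _ (fun k => k.val < m), Cf, Bf]
  congr 1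
  · apply card_filter_congr; intro k _; simp only [Fin.lt_def]; constructor <;> (intro h; tauto)
  · apply card_filter_congr; intro k _
    simp only [Fin.lt_def]
    constructor
    · rintro ⟨⟨h1, h2⟩, h3⟩; exact ⟨by omega, h2⟩
    · rintro ⟨h1, h2⟩; exact ⟨⟨by omega, h2⟩, by omega⟩

/-- Key comparison: `lehmer w p < Bf w i p ↔ w p < w i` for `i < p`. -/
lemma lehmer_lt_Bf_iff (w : Equiv.Perm (Fin n)) {i p : Fin n} (h : i < p) :
    lehmer w p < Bf w i p.val ↔ w p < w i := by
  constructor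
  · intro hlt
    by_contra hge
    have hne : w p ≠ w i := fun he => absurd (w.injective he) (Fin.ne_of_gt h)
    have hip : w i < w p := lt_of_le_of_ne (not_lt.mp hge) (Ne.symm hne)
    have : Bf w i p.val ≤ lehmer w p := by
      apply Finset.card_le_card
      intro k hk
      simp only [Bf, Finset.mem_filter, Finset.mem_univ, true_and] at hk
      simp only [lehmer, Finset.mem_filter, Finset.mem_univ, true_and]
      have hkp : p ≤ k := by exact_mod_cast hk.1
      have : k ≠ p := by
        intro he; rw [he] at hk; exact absurd (hk.2.trans hip) (lt_irrefl _)
      exact ⟨lt_of_le_of_ne hkp (Ne.symm this), hk.2.trans hip⟩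
    omega
  · intro hwp
    have : lehmer w p + 1 ≤ Bf w i p.val := by
      have hsub : insert p (Finset.univ.filter (fun k : Fin n => p < k ∧ w k < w p))
          ⊆ Finset.univ.filter (fun k : Fin n => p.val ≤ k.val ∧ w k < w i) := by
        intro k hk
        rcases Finset.mem_insert.mp hk with he | hmem
        · subst he; simp [hwp]
        · simp only [Finset.mem_filter, Finset.mem_univ, true_and] at hmem ⊢
          exact ⟨le_of_lt hmem.1, hmem.2.trans hwp⟩
      have hcard := Finset.card_le_card hsub
      rw [Finset.card_insert_of_notMem (by simp)] at hcard
      simpa [lehmer, Bf] using hcard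
    omega

/-- One step of `Cf`. -/
lemma Cf_succ (w : Equiv.Perm (Fin n)) {i p : Fin n} (hip : i < p) :
    Cf w i (p.val + 1) = Cf w i p.val + if w p < w i then 1 else 0 := by
  rw [Cf, Cf, card_filter_split _ _ (fun k => k.val < p.val)]
  congr 1
  · apply card_filter_congr; intro k _
    simp only [Fin.lt_def]
    constructor
    · rintro ⟨⟨h1, h2, h3⟩, h4⟩; exact ⟨h1, h4, h3⟩
    · rintro ⟨h1, h2, h3⟩; exact ⟨⟨h1, by omega, h3⟩, h2⟩
  · by_cases hw : w p < w i
    · rw [if_pos hw]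
      have : Finset.univ.filter
          (fun k : Fin n => (i < k ∧ k.val < p.val + 1 ∧ w k < w i) ∧ ¬ k.val < p.val) = {p} := by
        ext k
        simp only [Finset.mem_filter, Finset.mem_univ, true_and, Finset.mem_singleton]
        constructor
        · rintro ⟨⟨h1, h2, h3⟩, h4⟩; exact Fin.ext (by omega)
        · intro he; subst he; exact ⟨⟨hip, by omega, hw⟩, by omega⟩
      rw [this]; rfl
    · rw [if_neg hw]
      convert Finset.card_empty
      ext k
      simp only [Finset.mem_filter, Finset.mem_univ, true_and, Finset.notMem_empty, iff_false]
      rintro ⟨⟨h1, h2, h3⟩, h4⟩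
      have : k = p := Fin.ext (by omega)
      subst this; exact hw h3

lemma cmat_le (α : ℕ → ℕ) (i : ℕ) : ∀ m, cmat α i m ≤ α i := by
  intro m
  induction m with
  | zero => simp [cmat]
  | succ m ih =>
    rw [cmat]
    split_ifs with h1 h2
    · exact Nat.zero_le _
    · omega
    · omega

lemma cmat_codeP (w : Equiv.Perm (Fin n)) (i : Fin n) :
    ∀ m, m ≤ n + 1 → cmat (codeP n w) (i.val + 1) m = Cf w i (m - 1) := by
  intro m
  induction m with
  | zero =>
    intro _
    simp only [cmat, Cf]
    rw [eq_comm, Finset.card_eq_zero, Finset.filter_eq_empty_iff]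
    intro k _; rintro ⟨h1, h2, h3⟩; omega
  | succ m ih =>
    intro hm
    rw [cmat]
    by_cases hle : m + 1 ≤ i.val + 1 + 1
    · rw [if_pos hle]
      rw [eq_comm, Cf]
      rw [Finset.card_eq_zero, Finset.filter_eq_empty_iff]
      intro k _; rintro ⟨h1, h2, h3⟩
      rw [Fin.lt_def] at h1; omega
    · rw [if_neg hle]
      have hm' : m ≤ n + 1 := by omega
      have hmn : m ≤ n := by
        by_contra hc; omega
      -- position p = m - 1 (0-based), 1-based position m
      have hm1 : 1 ≤ m := by omega
      have hmi : i.val + 1 < m := by omega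
      set p : Fin n := ⟨m - 1, by omega⟩ with hp
      have hip : i < p := by rw [Fin.lt_def]; simp [hp]; omega
      have hα : codeP n w m = lehmer w p := by
        have : m = p.val + 1 := by simp [hp]; omega
        rw [this, codeP_apply]
      rw [ih hm', hα]
      have hsplit : lehmer w i = Cf w i (m - 1) + Bf w i (m - 1) := lehmer_split w (by omega)
      have hαI : codeP n w (i.val + 1) = lehmer w i := codeP_apply w i
      have hpv : p.val = m - 1 := rfl
      have hCs : Cf w i (p.val + 1) = Cf w i p.val + if w p < w i then 1 else 0 := Cf_succ w hip
      have hm2 : m + 1 - 1 = p.val + 1 := by omega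
      rw [hm2, hCs, hpv]
      have hkey : lehmer w p < Bf w i p.val ↔ w p < w i := lehmer_lt_Bf_iff w hip
      have hCle : Cf w i (m-1) ≤ lehmer w i := by omega
      rw [hαI]
      by_cases hw : w p < w i
      · rw [if_pos hw, if_pos]
        have h2 := hkey.mpr hw
        rw [hpv] at h2
        omega
      · rw [if_neg hw, if_neg]
        intro hc
        apply hw
        apply hkey.mp
        rw [hpv]
        omega

lemma nInv_eq_sum (w : Equiv.Perm (Fin n)) : nInv w = ∑ i, lehmer w i := by
  rw [nInv]
  rw [Finset.card_eq_sum_card_fiberwise (f := fun p : Fin n × Fin n => p.1)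
    (t := Finset.univ) (fun p _ => Finset.mem_univ p.1)]
  apply Finset.sum_congr rfl
  intro i _
  rw [lehmer]
  apply Finset.card_nbij' (i := fun p => p.2) (j := fun k => (i, k))
  · intro p hp
    simp only [Finset.mem_coe, Finset.mem_filter, Finset.mem_univ, true_and] at hp ⊢
    obtain ⟨⟨h1, h2⟩, h3⟩ := hp
    subst h3; exact ⟨h1, h2⟩
  · intro k hk
    simp only [Finset.mem_coe, Finset.mem_filter, Finset.mem_univ, true_and] at hk
    simp [hk.1, hk.2]
  · intro p hp
    simp only [Finset.mem_coe, Finset.mem_filter, Finset.mem_univ, true_and] at hp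
    obtain ⟨-, h3⟩ := hp
    simp [← h3]
  · intro k _; rfl

section SwapLemmas

variable (u : Equiv.Perm (Fin n)) {i j : Fin n}

lemma swap_lt_swap {i j k : Fin n} (hij : i < j) (hk : k < i) :
    ∀ m : Fin n, k < m → k < Equiv.swap i j m := by
  intro m hm
  rcases eq_or_ne m i with rfl | hi
  · rw [Equiv.swap_apply_left]; exact hk.trans hij
  rcases eq_or_ne m j with rfl | hj
  · rw [Equiv.swap_apply_right]; exact hk
  · rw [Equiv.swap_apply_of_ne_of_ne hi hj]; exact hm

lemma lehmer_swap_lt (hij : i < j) {k : Fin n} (hk : k < i) :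
    lehmer (u * Equiv.swap i j) k = lehmer u k := by
  have hsk : Equiv.swap i j k = k :=
    Equiv.swap_apply_of_ne_of_ne (ne_of_lt hk) (ne_of_lt (hk.trans hij))
  rw [lehmer, lehmer]
  apply Finset.card_nbij' (i := fun m => Equiv.swap i j m) (j := fun m => Equiv.swap i j m)
  · intro m hm
    simp only [Finset.mem_coe, Finset.mem_filter, Finset.mem_univ, true_and] at hm ⊢
    simp only [Equiv.Perm.mul_apply] at hm ⊢
    rw [hsk] at hm
    exact ⟨swap_lt_swap hij hk m hm.1, hm.2⟩
  · intro m hm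
    simp only [Finset.mem_coe, Finset.mem_filter, Finset.mem_univ, true_and] at hm ⊢
    simp only [Equiv.Perm.mul_apply] at hm ⊢
    rw [hsk]
    refine ⟨swap_lt_swap hij hk m hm.1, ?_⟩
    rw [Equiv.swap_apply_self]
    exact hm.2
  · intro m _; simp [Equiv.swap_apply_self]
  · intro m _; simp [Equiv.swap_apply_self]

lemma lehmer_swap_gt (hij : i < j) {k : Fin n} (hk : j < k) :
    lehmer (u * Equiv.swap i j) k = lehmer u k := by
  have hsk : Equiv.swap i j k = k :=
    Equiv.swap_apply_of_ne_of_ne (ne_of_gt (hij.trans hk)) (ne_of_gt hk)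
  rw [lehmer, lehmer]
  apply card_filter_congr
  intro m _
  simp only [Equiv.Perm.mul_apply, hsk]
  constructor
  · rintro ⟨h1, h2⟩
    rw [Equiv.swap_apply_of_ne_of_ne (ne_of_gt (hij.trans (hk.trans h1)))
      (ne_of_gt (hk.trans h1))] at h2
    exact ⟨h1, h2⟩
  · rintro ⟨h1, h2⟩
    rw [Equiv.swap_apply_of_ne_of_ne (ne_of_gt (hij.trans (hk.trans h1)))
      (ne_of_gt (hk.trans h1))]
    exact ⟨h1, h2⟩

lemma lehmer_swap_i (hij : i < j) :
    lehmer (u * Equiv.swap i j) i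
      = (Finset.univ.filter (fun m : Fin n => i < m ∧ u m < u j)).card
        + if u i < u j then 1 else 0 := by
  rw [lehmer, card_filter_split _ _ (fun m => m ≠ j)]
  congr 1
  · apply card_filter_congr
    intro m _
    simp only [Equiv.Perm.mul_apply, Equiv.swap_apply_left]
    constructor
    · rintro ⟨⟨h1, h2⟩, h3⟩
      rw [Equiv.swap_apply_of_ne_of_ne (ne_of_gt h1) h3] at h2
      exact ⟨h1, h2⟩
    · rintro ⟨h1, h2⟩
      have h3 : m ≠ j := by rintro rfl; exact absurd h2 (lt_irrefl _)
      rw [Equiv.swap_apply_of_ne_of_ne (ne_of_gt h1) h3]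
      exact ⟨⟨h1, h2⟩, h3⟩
  · by_cases hu : u i < u j
    · rw [if_pos hu]
      have : Finset.univ.filter (fun m : Fin n =>
          (i < m ∧ (u * Equiv.swap i j) m < (u * Equiv.swap i j) i) ∧ ¬ m ≠ j) = {j} := by
        ext m
        simp only [Finset.mem_filter, Finset.mem_univ, true_and, Finset.mem_singleton,
          not_not, Equiv.Perm.mul_apply, Equiv.swap_apply_left]
        constructor
        · rintro ⟨_, h⟩; exact h
        · rintro rfl
          exact ⟨⟨hij, by rwa [Equiv.swap_apply_right]⟩, rfl⟩
      rw [this]; rfl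
    · rw [if_neg hu]
      convert Finset.card_empty
      ext m
      simp only [Finset.mem_filter, Finset.mem_univ, true_and, Finset.notMem_empty,
        iff_false, not_not, Equiv.Perm.mul_apply, Equiv.swap_apply_left]
      rintro ⟨⟨h1, h2⟩, rfl⟩
      rw [Equiv.swap_apply_right] at h2
      exact hu h2

lemma lehmer_swap_j (hij : i < j) :
    lehmer (u * Equiv.swap i j) j
      = (Finset.univ.filter (fun m : Fin n => j < m ∧ u m < u i)).card := by
  rw [lehmer]
  apply card_filter_congr
  intro m _
  simp only [Equiv.Perm.mul_apply, Equiv.swap_apply_right]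
  constructor
  · rintro ⟨h1, h2⟩
    rw [Equiv.swap_apply_of_ne_of_ne (ne_of_gt (hij.trans h1)) (ne_of_gt h1)] at h2
    exact ⟨h1, h2⟩
  · rintro ⟨h1, h2⟩
    rw [Equiv.swap_apply_of_ne_of_ne (ne_of_gt (hij.trans h1)) (ne_of_gt h1)]
    exact ⟨h1, h2⟩

lemma lehmer_swap_mid_le (hij : i < j) {k : Fin n} (hik : i < k) (hkj : k < j)
    (hu : u i < u j) :
    lehmer u k ≤ lehmer (u * Equiv.swap i j) k := by
  have hsk : Equiv.swap i j k = k :=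
    Equiv.swap_apply_of_ne_of_ne (ne_of_gt hik) (ne_of_lt hkj)
  rw [lehmer, lehmer]
  apply Finset.card_le_card
  intro m hm
  simp only [Finset.mem_filter, Finset.mem_univ, true_and, Equiv.Perm.mul_apply, hsk] at hm ⊢
  refine ⟨hm.1, ?_⟩
  rcases eq_or_ne m j with rfl | hj
  · rw [Equiv.swap_apply_right]
    exact hu.trans hm.2
  · rw [Equiv.swap_apply_of_ne_of_ne (ne_of_gt (hik.trans hm.1)) hj]
    exact hm.2

lemma lehmer_swap_mid_eq (hij : i < j) {k : Fin n} (hik : i < k) (hkj : k < j)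
    (hiff : u j < u k ↔ u i < u k) :
    lehmer (u * Equiv.swap i j) k = lehmer u k := by
  have hsk : Equiv.swap i j k = k :=
    Equiv.swap_apply_of_ne_of_ne (ne_of_gt hik) (ne_of_lt hkj)
  rw [lehmer, lehmer]
  apply card_filter_congr
  intro m _
  simp only [Equiv.Perm.mul_apply, hsk]
  by_cases hm : k < m
  · rcases eq_or_ne m j with rfl | hj
    · rw [Equiv.swap_apply_right]
      exact and_congr_right fun _ => hiff.symm
    · rw [Equiv.swap_apply_of_ne_of_ne (ne_of_gt (hik.trans hm)) hj]
  · simp [hm]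

end SwapLemmas

lemma sum_split_two (f : Fin n → ℕ) {i j : Fin n} (hij : i ≠ j) :
    ∑ k, f k = f i + f j + ∑ k ∈ (Finset.univ.erase i).erase j, f k := by
  rw [← Finset.add_sum_erase _ f (Finset.mem_univ i),
    ← Finset.add_sum_erase _ f (show j ∈ Finset.univ.erase i by simp [hij.symm]), add_assoc]

lemma nInv_lt_swap {u : Equiv.Perm (Fin n)} {i j : Fin n} (hij : i < j) (hu : u i < u j) :
    nInv u < nInv (u * Equiv.swap i j) := by
  set v := u * Equiv.swap i j with hv
  rw [nInv_eq_sum, nInv_eq_sum, sum_split_two (lehmer u) (ne_of_lt hij),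
    sum_split_two (lehmer v) (ne_of_lt hij)]
  have hrest : ∑ k ∈ (Finset.univ.erase i).erase j, lehmer u k
      ≤ ∑ k ∈ (Finset.univ.erase i).erase j, lehmer v k := by
    apply Finset.sum_le_sum
    intro k hk
    simp only [Finset.mem_erase, Finset.mem_univ, and_true] at hk
    obtain ⟨hkj, hki⟩ := hk
    rcases lt_or_gt_of_ne hki with h | h
    · rw [lehmer_swap_lt u hij h]
    · rcases lt_or_gt_of_ne hkj with h2 | h2
      · exact lehmer_swap_mid_le u hij h h2 hu
      · rw [lehmer_swap_gt u hij h2]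
  have hvi : lehmer v i
      = (Finset.univ.filter (fun m : Fin n => i < m ∧ u m < u j)).card + 1 := by
    rw [hv, lehmer_swap_i u hij, if_pos hu]
  have hvj : lehmer v j
      = (Finset.univ.filter (fun m : Fin n => j < m ∧ u m < u i)).card := lehmer_swap_j u hij
  -- A = A1 + A2'
  have hA : (Finset.univ.filter (fun m : Fin n => i < m ∧ u m < u j)).card
      = lehmer u i
        + (Finset.univ.filter (fun m : Fin n => (i < m ∧ u m < u j) ∧ ¬ u m < u i)).card := by
    rw [card_filter_split _ _ (fun m => u m < u i)]
    congr 1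
    rw [lehmer]
    apply card_filter_congr
    intro m _
    constructor
    · rintro ⟨⟨h1, _⟩, h3⟩; exact ⟨h1, h3⟩
    · rintro ⟨h1, h2⟩; exact ⟨⟨h1, h2.trans hu⟩, h2⟩
  -- B1 = B + B2
  have hB : lehmer u j
      = (Finset.univ.filter (fun m : Fin n => j < m ∧ u m < u i)).card
        + (Finset.univ.filter (fun m : Fin n => (j < m ∧ u m < u j) ∧ ¬ u m < u i)).card := by
    rw [lehmer, card_filter_split _ _ (fun m => u m < u i)]
    congr 1
    apply card_filter_congr
    intro m _
    constructor
    · rintro ⟨⟨h1, _⟩, h3⟩; exact ⟨h1, h3⟩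
    · rintro ⟨h1, h2⟩; exact ⟨⟨h1, h2.trans hu⟩, h2⟩
  have hB2A2 : (Finset.univ.filter (fun m : Fin n => (j < m ∧ u m < u j) ∧ ¬ u m < u i)).card
      ≤ (Finset.univ.filter (fun m : Fin n => (i < m ∧ u m < u j) ∧ ¬ u m < u i)).card := by
    apply Finset.card_le_card
    intro m hm
    simp only [Finset.mem_filter, Finset.mem_univ, true_and] at hm ⊢
    exact ⟨⟨hij.trans hm.1.1, hm.1.2⟩, hm.2⟩
  omega

lemma card_lt_val (u : Equiv.Perm (Fin n)) (a : Fin n) :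
    (Finset.univ.filter (fun k : Fin n => u k < a)).card = a.val := by
  have : (Finset.univ.filter (fun k : Fin n => u k < a)).card
      = (Finset.univ.filter (fun x : Fin n => x < a)).card := by
    apply Finset.card_nbij' (i := fun k => u k) (j := fun x => u.symm x)
    · intro k hk; simpa using (by simpa using hk : u k < a)
    · intro x hx; simpa using (by simpa using hx : x < a)
    · intro k _; simp
    · intro k _; simp
  rw [this]
  have : Finset.univ.filter (fun x : Fin n => x < a) = Finset.Iio a := by
    ext x; simp
  rw [this, Fin.card_Iio]

lemma card_Ioo_val (u : Equiv.Perm (Fin n)) (a b : Fin n) :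
    (Finset.univ.filter (fun k : Fin n => a < u k ∧ u k < b)).card = b.val - a.val - 1 := by
  have : (Finset.univ.filter (fun k : Fin n => a < u k ∧ u k < b)).card
      = (Finset.univ.filter (fun x : Fin n => a < x ∧ x < b)).card := by
    apply Finset.card_nbij' (i := fun k => u k) (j := fun x => u.symm x)
    · intro k hk; simpa using (by simpa using hk : a < u k ∧ u k < b)
    · intro x hx
      have hx' : a < x ∧ x < b := by simpa using hx
      simp [hx'.1, hx'.2]
    · intro k _; simp
    · intro k _; simp
  rw [this]
  have : Finset.univ.filter (fun x : Fin n => a < x ∧ x < b) = Finset.Ioo a b := by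
    ext x; simp [Finset.mem_Ioo]
  rw [this, Fin.card_Ioo]

lemma val_eq_lehmer (u : Equiv.Perm (Fin n)) (i : Fin n) :
    (u i).val = (Finset.univ.filter (fun k : Fin n => k < i ∧ u k < u i)).card
      + lehmer u i := by
  rw [← card_lt_val u (u i), card_filter_split _ _ (fun k => k < i)]
  congr 1
  · apply card_filter_congr; intro k _; exact ⟨fun ⟨a, b⟩ => ⟨b, a⟩, fun ⟨a, b⟩ => ⟨b, a⟩⟩
  · rw [lehmer]
    apply card_filter_congr
    intro k _
    constructor
    · rintro ⟨h1, h2⟩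
      have : k ≠ i := fun he => absurd (he ▸ h1) (lt_irrefl _)
      exact ⟨lt_of_le_of_ne (not_lt.mp h2) (Ne.symm this), h1⟩
    · rintro ⟨h1, h2⟩
      exact ⟨h2, not_lt.mpr (le_of_lt h1)⟩

lemma not_lt_of_lehmer_eq {u v : Equiv.Perm (Fin n)}
    (hcode : ∀ k, lehmer u k = lehmer v k) {i : Fin n}
    (hb : ∀ k, k < i → u k = v k) : ¬ (u i < v i) := by
  intro hlt
  have h1 := val_eq_lehmer u i
  have h2 := val_eq_lehmer v i
  rw [← hcode i] at h2
  have hQ : (Finset.univ.filter (fun k : Fin n => k < i ∧ v k < v i)).card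
      = (Finset.univ.filter (fun k : Fin n => k < i ∧ u k < v i)).card := by
    apply card_filter_congr
    intro k _
    constructor
    · rintro ⟨hk, h⟩; exact ⟨hk, by rwa [hb k hk]⟩
    · rintro ⟨hk, h⟩; exact ⟨hk, by rwa [← hb k hk]⟩
  have hsplit : (Finset.univ.filter (fun k : Fin n => k < i ∧ u k < v i)).card
      = (Finset.univ.filter (fun k : Fin n => k < i ∧ u k < u i)).card
        + (Finset.univ.filter (fun k : Fin n => (k < i ∧ u k < v i) ∧ ¬ u k < u i)).card := by
    rw [card_filter_split _ _ (fun k => u k < u i)]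
    congr 1
    apply card_filter_congr
    intro k _
    constructor
    · rintro ⟨⟨hk, _⟩, h3⟩; exact ⟨hk, h3⟩
    · rintro ⟨hk, h⟩; exact ⟨⟨hk, h.trans hlt⟩, h⟩
  have hR : (Finset.univ.filter (fun k : Fin n => (k < i ∧ u k < v i) ∧ ¬ u k < u i)).card
      ≤ (Finset.univ.filter (fun k : Fin n => u i < u k ∧ u k < v i)).card := by
    apply Finset.card_le_card
    intro k hk
    simp only [Finset.mem_filter, Finset.mem_univ, true_and] at hk ⊢
    obtain ⟨⟨hki, hkv⟩, hnk⟩ := hk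
    have : u k ≠ u i := fun he => absurd (u.injective he ▸ hki) (lt_irrefl _)
    exact ⟨lt_of_le_of_ne (not_lt.mp hnk) (Ne.symm this), hkv⟩
  have hIoo := card_Ioo_val u (u i) (v i)
  have hval : (u i).val < (v i).val := hlt
  omega

lemma lehmer_inj {u v : Equiv.Perm (Fin n)}
    (hcode : ∀ k, lehmer u k = lehmer v k) : u = v := by
  have key : ∀ m : ℕ, ∀ x : Fin n, x.val = m → u x = v x := by
    intro m
    induction m using Nat.strong_induction_on with
    | _ m ih =>
      intro x hx
      have hb : ∀ k, k < x → u k = v k := fun k hk => ih k.val (hx ▸ hk) k rfl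
      have h1 := not_lt_of_lehmer_eq hcode hb (i := x)
      have h2 := not_lt_of_lehmer_eq (fun k => (hcode k).symm)
        (fun k hk => (hb k hk).symm) (i := x)
      exact le_antisymm (not_lt.mp h2) (not_lt.mp h1)
  apply Equiv.ext
  intro x
  exact key x.val x rfl

section Core

variable {w : Equiv.Perm (Fin n)} {i j : Fin n}

/-- no intermediate value condition -/
def NoMid (w : Equiv.Perm (Fin n)) (i j : Fin n) : Prop :=
  ∀ k, i < k → k < j → ¬(w j < w k ∧ w k < w i)

lemma nomid_iff (hd : w j < w i) (hni : NoMid w i j) {k : Fin n}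
    (hik : i < k) (hkj : k < j) : w k < w j ↔ w k < w i := by
  constructor
  · intro h; exact h.trans hd
  · intro h
    have h2 := hni k hik hkj
    have : ¬ w j < w k := fun hc => h2 ⟨hc, h⟩
    have : w k ≠ w j := fun he => absurd (w.injective he ▸ hkj) (lt_irrefl _)
    omega

lemma c1_lemma (hij : i < j) (hd : w j < w i) (hni : NoMid w i j) :
    ∀ k, k ≠ i → k ≠ j → lehmer (w * Equiv.swap i j) k = lehmer w k := by
  intro k hki hkj
  rcases lt_or_gt_of_ne hki with h | h
  · exact lehmer_swap_lt w hij h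
  · rcases lt_or_gt_of_ne hkj with h2 | h2
    · apply lehmer_swap_mid_eq w hij h h2
      constructor
      · intro hc
        have hne : w i ≠ w k := fun he => absurd (w.injective he ▸ h) (lt_irrefl _)
        have := hni k h h2
        omega
      · intro hc; exact hd.trans hc
    · exact lehmer_swap_gt w hij h2

lemma c2_lemma (hij : i < j) (hd : w j < w i) (hni : NoMid w i j) :
    lehmer (w * Equiv.swap i j) i = Cf w i j.val + lehmer w j := by
  rw [lehmer_swap_i w hij, if_neg (by omega),
    card_filter_split _ _ (fun m : Fin n => m.val < j.val)]
  have e1 : (Finset.univ.filter (fun m : Fin n => (i < m ∧ w m < w j) ∧ m.val < j.val)).card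
      = Cf w i j.val := by
    rw [Cf]
    apply card_filter_congr
    intro m _
    constructor
    · rintro ⟨⟨h1, h2⟩, h3⟩
      exact ⟨h1, h3, (nomid_iff hd hni h1 (Fin.lt_def.mpr h3)).mp h2⟩
    · rintro ⟨h1, h2, h3⟩
      exact ⟨⟨h1, (nomid_iff hd hni h1 (Fin.lt_def.mpr h2)).mpr h3⟩, h2⟩
  have e2 : (Finset.univ.filter (fun m : Fin n => (i < m ∧ w m < w j) ∧ ¬ m.val < j.val)).card
      = lehmer w j := by
    rw [lehmer]
    apply card_filter_congr
    intro m _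
    constructor
    · rintro ⟨⟨h1, h2⟩, h3⟩
      have hmj : m.val ≠ j.val := fun he => absurd (Fin.ext he ▸ h2) (lt_irrefl _)
      exact ⟨Fin.lt_def.mpr (by omega), h2⟩
    · rintro ⟨h1, h2⟩
      have := Fin.lt_def.mp h1
      exact ⟨⟨hij.trans h1, h2⟩, by omega⟩
  rw [e1, e2]
  omega

lemma c3_lemma (hij : i < j) (hd : w j < w i) :
    lehmer w i = Cf w i j.val + 1 + lehmer (w * Equiv.swap i j) j := by
  rw [lehmer_split w (show i.val < j.val from hij), lehmer_swap_j w hij]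
  have : Bf w i j.val
      = (Finset.univ.filter (fun m : Fin n => j < m ∧ w m < w i)).card + 1 := by
    rw [Bf, card_filter_split _ _ (fun m : Fin n => m ≠ j)]
    have e1 : (Finset.univ.filter (fun m : Fin n => (j.val ≤ m.val ∧ w m < w i) ∧ m ≠ j)).card
        = (Finset.univ.filter (fun m : Fin n => j < m ∧ w m < w i)).card := by
      apply card_filter_congr
      intro m _
      constructor
      · rintro ⟨⟨h1, h2⟩, h3⟩
        have : m.val ≠ j.val := fun he => h3 (Fin.ext he)
        exact ⟨Fin.lt_def.mpr (by omega), h2⟩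
      · rintro ⟨h1, h2⟩
        have := Fin.lt_def.mp h1
        exact ⟨⟨by omega, h2⟩, fun he => by rw [he] at h1; exact absurd h1 (lt_irrefl _)⟩
    have e2 : (Finset.univ.filter (fun m : Fin n => (j.val ≤ m.val ∧ w m < w i) ∧ ¬ m ≠ j))
        = {j} := by
      ext m
      simp only [Finset.mem_filter, Finset.mem_univ, true_and, Finset.mem_singleton, not_not]
      constructor
      · rintro ⟨_, h⟩; exact h
      · rintro rfl; exact ⟨⟨le_refl _, hd⟩, rfl⟩
    rw [e1, e2]
    rfl
  omega

lemma c4_lemma (hij : i < j) (hd : w j < w i) (hni : NoMid w i j) :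
    Cf (w * Equiv.swap i j) i j.val = Cf w i j.val := by
  rw [Cf, Cf]
  apply card_filter_congr
  intro k _
  have hvi : (w * Equiv.swap i j) i = w j := by
    simp [Equiv.Perm.mul_apply, Equiv.swap_apply_left]
  rw [hvi]
  by_cases h1 : i < k
  · by_cases h2 : k.val < j.val
    · have hkj : k < j := Fin.lt_def.mpr h2
      have hvk : (w * Equiv.swap i j) k = w k := by
        simp only [Equiv.Perm.mul_apply]
        rw [Equiv.swap_apply_of_ne_of_ne (ne_of_gt h1) (ne_of_lt hkj)]
      rw [hvk]
      simp only [h1, h2, true_and]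
      exact nomid_iff hd hni h1 hkj
    · simp [h2]
  · simp [h1]

lemma lehmer_j_le (hd : w j < w i) :
    lehmer w j ≤ (Finset.univ.filter (fun m : Fin n => j < m ∧ w m < w i)).card := by
  apply Finset.card_le_card
  intro m hm
  simp only [lehmer, Finset.mem_filter, Finset.mem_univ, true_and] at hm ⊢
  exact ⟨hm.1, hm.2.trans hd⟩

lemma core_lemma (hij : i < j) (hd : w j < w i) (hni : NoMid w i j) :
    CoversAt (codeP n w) (codeP n (w * Equiv.swap i j)) (i.val + 1) (j.val + 1)
      ∧ nInv w = nInv (w * Equiv.swap i j) + 1 := by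
  have hc1 := c1_lemma hij hd hni
  have hc2 := c2_lemma hij hd hni
  have hc3 := c3_lemma hij hd
  have hc4 := c4_lemma hij hd hni
  have hlej := lehmer_j_le hd
  have hvj : lehmer (w * Equiv.swap i j) j
      = (Finset.univ.filter (fun m : Fin n => j < m ∧ w m < w i)).card :=
    lehmer_swap_j w hij
  have hAI : codeP n w (i.val + 1) = lehmer w i := codeP_apply w i
  have hAJ : codeP n w (j.val + 1) = lehmer w j := codeP_apply w j
  have hBI : codeP n (w * Equiv.swap i j) (i.val + 1) = lehmer (w * Equiv.swap i j) i :=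
    codeP_apply _ i
  have hBJ : codeP n (w * Equiv.swap i j) (j.val + 1) = lehmer (w * Equiv.swap i j) j :=
    codeP_apply _ j
  have hcm : cmat (codeP n w) (i.val + 1) (j.val + 1) = Cf w i j.val := by
    have := cmat_codeP w i (j.val + 1) (by omega)
    simpa using this
  have hcm' : cmat (codeP n (w * Equiv.swap i j)) (i.val + 1) (j.val + 1)
      = Cf (w * Equiv.swap i j) i j.val := by
    have := cmat_codeP (w * Equiv.swap i j) i (j.val + 1) (by omega)
    simpa using this
  have hij' := Fin.lt_def.mp hij
  constructor
  · refine ⟨by omega, by omega, by omega, by omega, ?_, by rw [hcm, hcm', hc4], by omega⟩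
    intro k hki hkj
    by_cases hk : 1 ≤ k ∧ k ≤ n
    · set p : Fin n := ⟨k - 1, by omega⟩ with hpdef
      have hkp : k = p.val + 1 := by rw [hpdef]; simp; omega
      have h1 : codeP n w k = lehmer w p := by rw [hkp]; exact codeP_apply w p
      have h2 : codeP n (w * Equiv.swap i j) k = lehmer (w * Equiv.swap i j) p := by
        rw [hkp]; exact codeP_apply _ p
      rw [h1, h2]
      apply hc1
      · intro he; apply hki; rw [hkp, he]
      · intro he; apply hkj; rw [hkp, he]
    · rw [codeP_out w hk, codeP_out _ hk]
  · rw [nInv_eq_sum, nInv_eq_sum, sum_split_two (lehmer w) (ne_of_lt hij),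
      sum_split_two (lehmer (w * Equiv.swap i j)) (ne_of_lt hij)]
    have : ∑ k ∈ (Finset.univ.erase i).erase j, lehmer (w * Equiv.swap i j) k
        = ∑ k ∈ (Finset.univ.erase i).erase j, lehmer w k := by
      apply Finset.sum_congr rfl
      intro k hk
      simp only [Finset.mem_erase, Finset.mem_univ, and_true] at hk
      exact hc1 k hk.2 hk.1
    rw [this]
    omega

end Core

section CmatGeneric

variable {α α' : ℕ → ℕ} {I J : ℕ}

lemma cmat_zero_s19 (α : ℕ → ℕ) (I : ℕ) : ∀ m, m ≤ I + 1 → cmat α I m = 0 := by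
  intro m
  induction m with
  | zero => intro _; rfl
  | succ m ih => intro h; rw [cmat, if_pos (by omega)]

lemma cmat_compare (hoff : ∀ m, I < m → m < J → α' m = α m) (ha : α' I < α I) :
    ∀ m, m ≤ J → cmat α' I m ≤ cmat α I m
      ∧ α' I + cmat α I m ≤ α I + cmat α' I m := by
  intro m
  induction m with
  | zero => intro _; exact ⟨le_refl _, by simpa [cmat] using le_of_lt ha⟩
  | succ m ih =>
    intro hm
    have ihm := ih (by omega)
    rw [cmat, cmat]
    by_cases h : m + 1 ≤ I + 1
    · rw [if_pos h, if_pos h]; omega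
    · rw [if_neg h, if_neg h, hoff m (by omega) (by omega)]
      have h1 := cmat_le α I m
      have h2 := cmat_le α' I m
      split_ifs <;> omega

lemma cmat_diff_step (hoff : ∀ m, I < m → m < J → α' m = α m) (ha : α' I < α I) :
    ∀ m, m + 1 ≤ J →
      cmat α I m + cmat α' I (m + 1) ≤ cmat α I (m + 1) + cmat α' I m := by
  intro m hm
  rw [cmat, cmat]
  by_cases h : m + 1 ≤ I + 1
  · rw [if_pos h, if_pos h, cmat_zero_s19 α I m (by omega), cmat_zero_s19 α' I m (by omega)]
  · rw [if_neg h, if_neg h, hoff m (by omega) (by omega)]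
    have h1 := cmat_le α I m
    have h2 := cmat_le α' I m
    have h3 := cmat_compare hoff ha m (by omega)
    split_ifs <;> omega

lemma cmat_diff_mono (hoff : ∀ m, I < m → m < J → α' m = α m) (ha : α' I < α I) :
    ∀ m m2, m ≤ m2 → m2 ≤ J →
      cmat α I m + cmat α' I m2 ≤ cmat α I m2 + cmat α' I m := by
  intro m m2
  induction m2 with
  | zero => intro h1 _; interval_cases m; omega
  | succ m2 ih =>
    intro h1 h2
    rcases Nat.lt_or_ge m (m2 + 1) with h | h
    · have hstep := cmat_diff_step hoff ha m2 h2
      have := ih (by omega) (by omega)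
      omega
    · have : m = m2 + 1 := by omega
      subst this; omega

lemma cmat_all_eq (hoff : ∀ m, I < m → m < J → α' m = α m) (ha : α' I < α I)
    (hEq : cmat α I J = cmat α' I J) :
    ∀ m, m ≤ J → cmat α' I m = cmat α I m := by
  intro m hm
  have h1 := cmat_compare hoff ha m hm
  have h2 := cmat_diff_mono hoff ha m J hm (le_refl _)
  omega

lemma cmat_extract (hoff : ∀ m, I < m → m < J → α' m = α m) (ha : α' I < α I)
    (hEq : cmat α I J = cmat α' I J) :
    ∀ m, I < m → m + 1 ≤ J → α m + cmat α I m < α I → α m + cmat α I m < α' I := by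
  intro m hIm hmJ hcond
  have hI : ¬ (m + 1 ≤ I + 1) := by omega
  have hcs : cmat α I (m + 1) = cmat α I m + if α m < α I - cmat α I m then 1 else 0 := by
    rw [cmat, if_neg hI]
  have hcs' : cmat α' I (m + 1)
      = cmat α' I m + if α m < α' I - cmat α' I m then 1 else 0 := by
    rw [cmat, if_neg hI, hoff m (by omega) (by omega)]
  have e1 := cmat_all_eq hoff ha hEq (m + 1) hmJ
  have e2 := cmat_all_eq hoff ha hEq m (by omega)
  have h1 := cmat_le α I m
  have h2 := cmat_le α' I m
  split_ifs at hcs hcs' <;> omega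

end CmatGeneric

section BWD

variable {w : Equiv.Perm (Fin n)} {i j : Fin n}

lemma count_max (hd : w j < w i) {k : Fin n} (hik : i < k) (hkj : k < j)
    (hjk : w j < w k)
    (hmax : ∀ k', i < k' → k' < j → w j < w k' → w k' < w i → k' ≤ k) :
    (Finset.univ.filter (fun m : Fin n => k < m ∧ m.val < j.val ∧ w m < w i)).card
      + 1 + lehmer w j ≤ lehmer w k := by
  set A := Finset.univ.filter (fun m : Fin n => k < m ∧ m.val < j.val ∧ w m < w i) with hA
  set C := Finset.univ.filter (fun m : Fin n => j < m ∧ w m < w j) with hC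
  have hsub : A ∪ insert j C ⊆ Finset.univ.filter (fun m : Fin n => k < m ∧ w m < w k) := by
    intro m hm
    simp only [Finset.mem_union, Finset.mem_insert, hA, hC, Finset.mem_filter,
      Finset.mem_univ, true_and] at hm
    simp only [Finset.mem_filter, Finset.mem_univ, true_and]
    rcases hm with ⟨h1, h2, h3⟩ | h4
    · refine ⟨h1, ?_⟩
      have hmlt : m < j := Fin.lt_def.mpr h2
      have hnw : ¬ w j < w m := fun hc =>
        absurd (hmax m (hik.trans h1) hmlt hc h3) (not_le.mpr h1)
      have hne : w m ≠ w j := fun he => absurd (w.injective he ▸ hmlt) (lt_irrefl _)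
      have : w m < w j := by omega
      exact this.trans hjk
    · rcases h4 with rfl | ⟨h5, h6⟩
      · exact ⟨hkj, hjk⟩
      · exact ⟨hkj.trans h5, h6.trans hjk⟩
  have hjC : j ∉ C := by simp [hC]
  have hdisj : Disjoint A (insert j C) := by
    rw [Finset.disjoint_left]
    intro m hm hm'
    simp only [hA, Finset.mem_filter, Finset.mem_univ, true_and] at hm
    simp only [Finset.mem_insert, hC, Finset.mem_filter, Finset.mem_univ, true_and] at hm'
    rcases hm' with rfl | ⟨h5, h6⟩
    · exact absurd hm.2.1 (lt_irrefl _)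
    · have := Fin.lt_def.mp h5; omega
  have hcard := Finset.card_le_card hsub
  rw [Finset.card_union_of_disjoint hdisj, Finset.card_insert_of_notMem hjC] at hcard
  have hTl : lehmer w k
      = (Finset.univ.filter (fun m : Fin n => k < m ∧ w m < w k)).card := rfl
  have hCl : C.card = lehmer w j := rfl
  omega

lemma bwd_lemma {α' : ℕ → ℕ} {I J : ℕ}
    (h : CoversAt (codeP n w) α' I J) :
    ∃ i j : Fin n, i < j ∧ I = i.val + 1 ∧ J = j.val + 1 ∧
      α' = codeP n (w * Equiv.swap i j)
      ∧ nInv w = nInv (w * Equiv.swap i j) + 1 := by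
  obtain ⟨h1I, hIJ, ha2, ha3, hoff', ha5, ha4⟩ := h
  have hoff : ∀ m, I < m → m < J → α' m = codeP n w m :=
    fun m hm1 hm2 => hoff' m (by omega) (by omega)
  have ha : α' I < codeP n w I := by omega
  have hIn : I ≤ n := by
    by_contra hc
    rw [codeP_out w (by omega)] at ha2
    omega
  set i : Fin n := ⟨I - 1, by omega⟩ with hidef
  have hIi : I = i.val + 1 := by simp [hidef]; omega
  have hAI : codeP n w I = lehmer w i := by rw [hIi]; exact codeP_apply w i
  have hJn : J ≤ n := by
    by_contra hJc
    have h6 : cmat (codeP n w) I (n + 1) = lehmer w i := by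
      rw [hIi]
      have := cmat_codeP w i (n + 1) (le_refl _)
      simp only [Nat.add_sub_cancel] at this
      rw [this, Cf, lehmer]
      apply card_filter_congr
      intro m _
      simp [m.isLt]
    have h8 : ∀ m, n + 1 ≤ m → cmat (codeP n w) I m = lehmer w i := by
      intro m
      induction m with
      | zero => omega
      | succ m ih =>
        intro hm
        rcases Nat.lt_or_ge m (n + 1) with h | h
        · have : m = n := by omega
          subst this; exact h6
        · have := ih h
          rw [cmat, if_neg (by omega), this, codeP_out w (by omega), hAI]
          simp
    have h9 := h8 J (by omega)
    rw [h9] at ha4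
    omega
  set j : Fin n := ⟨J - 1, by omega⟩ with hjdef
  have hJj : J = j.val + 1 := by simp [hjdef]; omega
  have hij : i < j := by rw [Fin.lt_def]; simp [hidef, hjdef]; omega
  have hAJ : codeP n w J = lehmer w j := by rw [hJj]; exact codeP_apply w j
  have hcm : cmat (codeP n w) I J = Cf w i j.val := by
    rw [hIi, hJj]
    have := cmat_codeP w i (j.val + 1) (by omega)
    simpa using this
  have hsplitl : lehmer w i = Cf w i j.val + Bf w i j.val :=
    lehmer_split w (Fin.lt_def.mp hij)
  have hd : w j < w i := by
    apply (lehmer_lt_Bf_iff w hij).mp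
    omega
  have hnm : NoMid w i j := by
    intro k hik hkj hcon
    obtain ⟨hjk0, hki0⟩ := hcon
    -- pass to the maximal such k
    have hSne : (Finset.univ.filter
        (fun k : Fin n => i < k ∧ k < j ∧ w j < w k ∧ w k < w i)).Nonempty :=
      ⟨k, by simp [hik, hkj, hjk0, hki0]⟩
    obtain ⟨K, hKS, hKmax'⟩ : ∃ K, K ∈ (Finset.univ.filter
        (fun k : Fin n => i < k ∧ k < j ∧ w j < w k ∧ w k < w i))
        ∧ ∀ k' ∈ (Finset.univ.filter
          (fun k : Fin n => i < k ∧ k < j ∧ w j < w k ∧ w k < w i)), k' ≤ K :=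
      ⟨_, Finset.max'_mem _ hSne, fun k' hk' => Finset.le_max' _ k' hk'⟩
    simp only [Finset.mem_filter, Finset.mem_univ, true_and] at hKS
    obtain ⟨hiK, hKj, hjK, hKi⟩ := hKS
    have hmax : ∀ k', i < k' → k' < j → w j < w k' → w k' < w i → k' ≤ K := by
      intro k' a b c d
      apply hKmax'
      simp [a, b, c, d]
    set m := K.val + 1 with hm
    have hIm : I < m := by rw [hIi, hm]; have := Fin.lt_def.mp hiK; omega
    have hmJ : m + 1 ≤ J := by rw [hJj, hm]; have := Fin.lt_def.mp hKj; omega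
    have hcmk : cmat (codeP n w) I m = Cf w i K.val := by
      rw [hIi, hm]
      have := cmat_codeP w i (K.val + 1) (by omega)
      simpa using this
    have hαm : codeP n w m = lehmer w K := by rw [hm]; exact codeP_apply w K
    have hsplitk : lehmer w i = Cf w i K.val + Bf w i K.val :=
      lehmer_split w (Fin.lt_def.mp hiK)
    have hkey : lehmer w K < Bf w i K.val := (lehmer_lt_Bf_iff w hiK).mpr hKi
    have hcond : codeP n w m + cmat (codeP n w) I m < codeP n w I := by
      rw [hαm, hcmk, hAI]; omega
    have hext := cmat_extract hoff ha ha5 m hIm hmJ hcond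
    rw [hαm, hcmk] at hext
    -- counting contradiction
    have hCfsplit : Cf w i j.val = Cf w i (K.val + 1)
        + (Finset.univ.filter
            (fun m' : Fin n => K < m' ∧ m'.val < j.val ∧ w m' < w i)).card := by
      rw [Cf, card_filter_split _ _ (fun m' : Fin n => m'.val < K.val + 1)]
      congr 1
      · rw [Cf]
        apply card_filter_congr
        intro x _
        constructor
        · rintro ⟨⟨x1, x2, x3⟩, x4⟩; exact ⟨x1, x4, x3⟩
        · rintro ⟨x1, x2, x3⟩
          have := Fin.lt_def.mp hKj
          exact ⟨⟨x1, by omega, x3⟩, x2⟩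
      · apply card_filter_congr
        intro x _
        constructor
        · rintro ⟨⟨x1, x2, x3⟩, x4⟩; exact ⟨Fin.lt_def.mpr (by omega), x2, x3⟩
        · rintro ⟨x1, x2, x3⟩
          have := Fin.lt_def.mp x1
          have := Fin.lt_def.mp hiK
          exact ⟨⟨Fin.lt_def.mpr (by omega), x2, x3⟩, by omega⟩
    have hCfk : Cf w i (K.val + 1) = Cf w i K.val + 1 := by
      rw [Cf_succ w hiK, if_pos hKi]
    have hbig := count_max hd hiK hKj hjK hmax
    omega
  -- now use the core lemma
  obtain ⟨hcov, hninv⟩ := core_lemma hij hd hnm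
  obtain ⟨_, _, cb2, cb3, cboff, cb5, cb4⟩ := hcov
  refine ⟨i, j, hij, hIi, hJj, ?_, hninv⟩
  rw [hIi, hJj] at ha3 ha4
  funext x
  rcases eq_or_ne x I with rfl | hxI
  · rw [hIi]
    omega
  · rcases eq_or_ne x J with rfl | hxJ
    · rw [hJj]
      omega
    · rw [hoff' x hxI hxJ]
      rw [hIi] at hxI
      rw [hJj] at hxJ
      exact (cboff x hxI hxJ).symm

end BWD

lemma codeP_inj {u v : Equiv.Perm (Fin n)} (h : codeP n u = codeP n v) : u = v := by
  apply lehmer_inj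
  intro k
  have := congrFun h (k.val + 1)
  rwa [codeP_apply, codeP_apply] at this

lemma swap_three {i k j : Fin n} (hij : i ≠ j) (hkj : k ≠ j) :
    Equiv.swap i k * Equiv.swap k j * Equiv.swap i k = Equiv.swap i j := by
  have := Equiv.swap_mul_swap_mul_swap (x := j) (y := k) (z := i) hkj.symm hij.symm
  rwa [Equiv.swap_comm k i, Equiv.swap_comm j k] at this

lemma fwd_lemma {w w' : Equiv.Perm (Fin n)} {i j : Fin n} (hij : i < j)
    (hcov : bruhatCovers w w') (hsw : w = w' * Equiv.swap i j) :
    CoversAt (codeP n w) (codeP n w') (i.val + 1) (j.val + 1) := by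
  have hw' : w' = w * Equiv.swap i j := by rw [hsw, Equiv.mul_swap_mul_self]
  have hnInv : nInv w = nInv w' + 1 := hcov.2
  have hne : w i ≠ w j := fun he => absurd (w.injective he) (ne_of_lt hij)
  have hd : w j < w i := by
    rcases lt_or_gt_of_ne hne with hlt | hgt
    · exfalso
      have := nInv_lt_swap hij hlt
      rw [← hw'] at this
      omega
    · exact hgt
  have hnm : NoMid w i j := by
    intro k hik hkj hcon
    obtain ⟨hjk, hki⟩ := hcon
    have hui : w' i = w j := by
      rw [hw']; simp [Equiv.Perm.mul_apply, Equiv.swap_apply_left]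
    have huj : w' j = w i := by
      rw [hw']; simp [Equiv.Perm.mul_apply, Equiv.swap_apply_right]
    have huk : w' k = w k := by
      rw [hw']
      simp only [Equiv.Perm.mul_apply]
      rw [Equiv.swap_apply_of_ne_of_ne (ne_of_gt hik) (ne_of_lt hkj)]
    have h1 : nInv w' < nInv (w' * Equiv.swap i k) :=
      nInv_lt_swap hik (by rw [hui, huk]; exact hjk)
    have h2k : (w' * Equiv.swap i k) k = w j := by
      simp only [Equiv.Perm.mul_apply, Equiv.swap_apply_right]; exact hui
    have h2j : (w' * Equiv.swap i k) j = w i := by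
      simp only [Equiv.Perm.mul_apply]
      rw [Equiv.swap_apply_of_ne_of_ne (ne_of_gt hij) (ne_of_gt hkj)]
      exact huj
    have h2 : nInv (w' * Equiv.swap i k)
        < nInv (w' * Equiv.swap i k * Equiv.swap k j) :=
      nInv_lt_swap hkj (by rw [h2k, h2j]; exact hd)
    have h3i : (w' * Equiv.swap i k * Equiv.swap k j) i = w k := by
      simp only [Equiv.Perm.mul_apply]
      rw [Equiv.swap_apply_of_ne_of_ne (ne_of_lt hik) (ne_of_lt hij),
        Equiv.swap_apply_left]
      exact huk
    have h3k : (w' * Equiv.swap i k * Equiv.swap k j) k = w i := by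
      simp only [Equiv.Perm.mul_apply, Equiv.swap_apply_left]
      rw [Equiv.swap_apply_of_ne_of_ne (ne_of_gt hij) (ne_of_gt hkj)]
      exact huj
    have h3 : nInv (w' * Equiv.swap i k * Equiv.swap k j)
        < nInv (w' * Equiv.swap i k * Equiv.swap k j * Equiv.swap i k) :=
      nInv_lt_swap hik (by rw [h3i, h3k]; exact hki)
    have h4 : w' * Equiv.swap i k * Equiv.swap k j * Equiv.swap i k = w := by
      rw [mul_assoc, mul_assoc, ← mul_assoc (Equiv.swap i k),
        swap_three (ne_of_lt hij) (ne_of_lt hkj), ← hsw]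
    rw [h4] at h3
    omega
  have := (core_lemma hij hd hnm).1
  rwa [← hw'] at this

lemma step_decomp : ∀ g : ℕ, ∀ u v : Equiv.Perm (Fin n), bruhatStep u v →
    nInv v - nInv u ≤ g →
    Relation.ReflTransGen (fun x y => ∃ I J, CoversAt y x I J) (codeP n u) (codeP n v) := by
  intro g
  induction g using Nat.strong_induction_on with
  | _ g ih =>
    intro u v hstep hg
    obtain ⟨⟨i0, j0, hne0, hv0⟩, hlt⟩ := hstep
    obtain ⟨i, j, hij, hv⟩ : ∃ i j, i < j ∧ v = u * Equiv.swap i j := by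
      rcases lt_or_gt_of_ne hne0 with h | h
      · exact ⟨i0, j0, h, hv0⟩
      · exact ⟨j0, i0, h, by rwa [Equiv.swap_comm]⟩
    have hvu : v * Equiv.swap i j = u := by rw [hv, Equiv.mul_swap_mul_self]
    have hvi : v i = u j := by rw [hv]; simp [Equiv.Perm.mul_apply, Equiv.swap_apply_left]
    have hvj : v j = u i := by rw [hv]; simp [Equiv.Perm.mul_apply, Equiv.swap_apply_right]
    have hune : u i ≠ u j := fun he => absurd (u.injective he) (ne_of_lt hij)
    have huij : u i < u j := by
      rcases lt_or_gt_of_ne hune with h | h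
      · exact h
      · exfalso
        have := nInv_lt_swap hij (show v i < v j by rw [hvi, hvj]; exact h)
        rw [hvu] at this
        omega
    by_cases hmid : ∃ k, i < k ∧ k < j ∧ u i < u k ∧ u k < u j
    · obtain ⟨k, hik, hkj, hm1, hm2⟩ := hmid
      have hs1 : bruhatStep u (u * Equiv.swap i k) :=
        ⟨⟨i, k, ne_of_lt hik, rfl⟩, nInv_lt_swap hik hm1⟩
      have h1k : (u * Equiv.swap i k) k = u i := by
        simp [Equiv.Perm.mul_apply, Equiv.swap_apply_right]
      have h1j : (u * Equiv.swap i k) j = u j := by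
        simp only [Equiv.Perm.mul_apply]
        rw [Equiv.swap_apply_of_ne_of_ne (ne_of_gt hij) (ne_of_gt hkj)]
      have hs2 : bruhatStep (u * Equiv.swap i k) (u * Equiv.swap i k * Equiv.swap k j) :=
        ⟨⟨k, j, ne_of_lt hkj, rfl⟩, nInv_lt_swap hkj (by rw [h1k, h1j]; exact huij)⟩
      have h2i : (u * Equiv.swap i k * Equiv.swap k j) i = u k := by
        simp only [Equiv.Perm.mul_apply]
        rw [Equiv.swap_apply_of_ne_of_ne (ne_of_lt hik) (ne_of_lt hij),
          Equiv.swap_apply_left]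
      have h2k : (u * Equiv.swap i k * Equiv.swap k j) k = u j := by
        simp only [Equiv.Perm.mul_apply, Equiv.swap_apply_left]
        rw [Equiv.swap_apply_of_ne_of_ne (ne_of_gt hij) (ne_of_gt hkj)]
      have hveq : u * Equiv.swap i k * Equiv.swap k j * Equiv.swap i k = v := by
        rw [mul_assoc, mul_assoc, ← mul_assoc (Equiv.swap i k),
          swap_three (ne_of_lt hij) (ne_of_lt hkj), ← hv]
      have hs3 : bruhatStep (u * Equiv.swap i k * Equiv.swap k j) v :=
        ⟨⟨i, k, ne_of_lt hik, hveq.symm⟩,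
          by rw [← hveq]; exact nInv_lt_swap hik (by rw [h2i, h2k]; exact hm2)⟩
      have g1 := hs1.2
      have g2 := hs2.2
      have g3 := hs3.2
      have r1 := ih (nInv (u * Equiv.swap i k) - nInv u) (by omega) u _ hs1 (le_refl _)
      have r2 := ih (nInv (u * Equiv.swap i k * Equiv.swap k j)
          - nInv (u * Equiv.swap i k)) (by omega) _ _ hs2 (le_refl _)
      have r3 := ih (nInv v - nInv (u * Equiv.swap i k * Equiv.swap k j)) (by omega)
          _ _ hs3 (le_refl _)
      exact (r1.trans r2).trans r3
    · push_neg at hmid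
      have hd : v j < v i := by rw [hvi, hvj]; exact huij
      have hnm : NoMid v i j := by
        intro k hik hkj hcon
        have hvk : v k = u k := by
          rw [hv]
          simp only [Equiv.Perm.mul_apply]
          rw [Equiv.swap_apply_of_ne_of_ne (ne_of_gt hik) (ne_of_lt hkj)]
        rw [hvk, hvj, hvi] at hcon
        exact absurd hcon.2 (not_lt.mpr (hmid k hik hkj hcon.1))
      have hcore := (core_lemma hij hd hnm).1
      rw [hvu] at hcore
      exact Relation.ReflTransGen.single ⟨i.val + 1, j.val + 1, hcore⟩

lemma leA_to_bruhat {β γ : ℕ → ℕ}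
    (h : Relation.ReflTransGen (fun x y => ∃ I J, CoversAt y x I J) β γ) :
    ∀ w : Equiv.Perm (Fin n), γ = codeP n w → ∃ u, β = codeP n u ∧ bruhatLE u w := by
  induction h with
  | refl => intro w hw; exact ⟨w, hw, Relation.ReflTransGen.refl⟩
  | tail _ h2 ih =>
    intro w hw
    obtain ⟨I, J, hc⟩ := h2
    rw [hw] at hc
    obtain ⟨i, j, hij, hI, hJ, heq, hninv⟩ := bwd_lemma hc
    obtain ⟨u, hu1, hu2⟩ := ih (w * Equiv.swap i j) heq
    refine ⟨u, hu1, hu2.tail ?_⟩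
    exact ⟨⟨i, j, ne_of_lt hij, (Equiv.mul_swap_mul_self i j w).symm⟩, by omega⟩

/-- `w` covers `w'` in the strong Bruhat order with
`w = w'·(i,j)` iff `code(w)` covers `code(w')` in position `(i,j)`;
consequently the Bruhat order on `S_n` corresponds, via the Lehmer code,
to the order `≤_A` of the poset `PC_n`. -/
theorem bruhat_iff_code_covers (n : ℕ) (w w' : Equiv.Perm (Fin n)) :
    (∀ i j : Fin n, i < j →
      ((bruhatCovers w w' ∧ w = w' * Equiv.swap i j) ↔
        CoversAt (codeP n w) (codeP n w') (i.val + 1) (j.val + 1))) ∧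
    (bruhatLE w' w ↔ leA (codeP n w') (codeP n w)) := by
  constructor
  · intro i j hij
    constructor
    · rintro ⟨hcov, hsw⟩
      exact fwd_lemma hij hcov hsw
    · intro hca
      obtain ⟨i0, j0, hij0, hI, hJ, heq, hninv⟩ := bwd_lemma hca
      have hi0 : i0 = i := Fin.ext (by omega)
      have hj0 : j0 = j := Fin.ext (by omega)
      rw [hi0, hj0] at heq hninv
      have hw' : w' = w * Equiv.swap i j := codeP_inj heq
      refine ⟨⟨?_, ?_⟩, ?_⟩
      · refine Relation.ReflTransGen.single
          ⟨⟨i, j, ne_of_lt hij, ?_⟩, ?_⟩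
        · rw [hw', Equiv.mul_swap_mul_self]
        · rw [hw']; omega
      · rw [hw']; omega
      · rw [hw', Equiv.mul_swap_mul_self]
  · constructor
    · intro hble
      induction hble with
      | refl => exact Relation.ReflTransGen.refl
      | tail _ h2 ih => exact ih.trans (step_decomp _ _ _ h2 (le_refl _))
    · intro hla
      obtain ⟨u, hu1, hu2⟩ := leA_to_bruhat hla w rfl
      rwa [codeP_inj hu1]
end
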